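/- Let m ≥ √21/3. Then U₁₀(φ; m) = m⁴ − 2(φ² + 2/3)m² + (10/3)φ⁴ − 2φ² + 1 ≥ 0 for all φ ∈ ℝ, and hence the transformed potential V of W₁₀(φ;m) = φ²(φ²−1)²(φ²−m²)² satisfies V'(φ) ≥ 0 for all φ > 0 with W₁₀(φ;m) > 0. -/

import Mathlib

open Real Set

theorem phi10_repulsivity (m : ℝ) (hm : Real.sqrt 21 / 3 ≤ m) :
    let U : ℝ → ℝ := fun φ => m ^ 4 - 2 * (φ ^ 2 + 2 / 3) * m ^ 2
        + (10 / 3) * φ ^ 4 - 2 * φ ^ 2 + 1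
    let W : ℝ → ℝ := fun φ => φ ^ 2 * (φ ^ 2 - 1) ^ 2 * (φ ^ 2 - m ^ 2) ^ 2
    let V : ℝ → ℝ := fun φ => (deriv W φ) ^ 2 / W φ - iteratedDeriv 2 W φ
    (∀ φ : ℝ, 0 ≤ U φ) ∧
    (∀ φ : ℝ, 0 < φ → 0 < W φ → 0 ≤ deriv V φ) := by
  intro U W V
  -- m^2 ≥ 7/3
  have h21 : (0:ℝ) ≤ Real.sqrt 21 / 3 := by positivity
  have hm2 : (7:ℝ)/3 ≤ m ^ 2 := by
    have h := pow_le_pow_left₀ h21 hm 2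
    have h2 : (Real.sqrt 21 / 3) ^ 2 = 7/3 := by
      rw [div_pow, Real.sq_sqrt (by norm_num : (21:ℝ) ≥ 0)]
      norm_num
    linarith [h2 ▸ h]
  -- U nonneg
  have hU : ∀ φ : ℝ, 0 ≤ U φ := by
    intro φ
    show 0 ≤ m ^ 4 - 2 * (φ ^ 2 + 2 / 3) * m ^ 2 + (10 / 3) * φ ^ 4 - 2 * φ ^ 2 + 1
    nlinarith [sq_nonneg (m ^ 2 - φ ^ 2 - 2/3), sq_nonneg (φ ^ 2 - 1),
      sq_nonneg (φ ^ 2 - 5/3), mul_nonneg (sub_nonneg.2 hm2) (sq_nonneg (φ - 1)),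
      sq_nonneg φ, sq_nonneg (m ^ 2 - 7/3)]
  refine ⟨hU, ?_⟩
  intro φ hφ hWpos
  -- derivative functions
  set P : ℝ → ℝ := fun x => 10 * x ^ 9 - 16 * (1 + m ^ 2) * x ^ 7
      + 6 * (1 + 4 * m ^ 2 + m ^ 4) * x ^ 5 - 8 * (m ^ 2 + m ^ 4) * x ^ 3
      + 2 * m ^ 4 * x with hPdef
  set Q : ℝ → ℝ := fun x => 90 * x ^ 8 - 112 * (1 + m ^ 2) * x ^ 6
      + 30 * (1 + 4 * m ^ 2 + m ^ 4) * x ^ 4 - 24 * (m ^ 2 + m ^ 4) * x ^ 2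
      + 2 * m ^ 4 with hQdef
  have hW1 : ∀ x : ℝ, HasDerivAt W (P x) x := by
    intro x
    have h1 : HasDerivAt (fun y : ℝ => y ^ 2) (2 * x) x := by
      simpa using hasDerivAt_pow 2 x
    have h2 : HasDerivAt (fun y : ℝ => (y ^ 2 - 1) ^ 2)
        ((2 : ℕ) * (x ^ 2 - 1) ^ 1 * (2 * x)) x := (h1.sub_const 1).pow 2
    have h3 : HasDerivAt (fun y : ℝ => (y ^ 2 - m ^ 2) ^ 2)
        ((2 : ℕ) * (x ^ 2 - m ^ 2) ^ 1 * (2 * x)) x := (h1.sub_const (m ^ 2)).pow 2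
    have h4 := (h1.mul h2).mul h3
    refine h4.congr_deriv ?_
    push_cast [Pi.mul_apply, hPdef]
    ring
  have hP1 : ∀ x : ℝ, HasDerivAt P (Q x) x := by
    intro x
    have h9 : HasDerivAt (fun y : ℝ => y ^ 9) (9 * x ^ 8) x := by
      simpa using hasDerivAt_pow 9 x
    have h7 : HasDerivAt (fun y : ℝ => y ^ 7) (7 * x ^ 6) x := by
      simpa using hasDerivAt_pow 7 x
    have h5 : HasDerivAt (fun y : ℝ => y ^ 5) (5 * x ^ 4) x := by
      simpa using hasDerivAt_pow 5 x
    have h3 : HasDerivAt (fun y : ℝ => y ^ 3) (3 * x ^ 2) x := by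
      simpa using hasDerivAt_pow 3 x
    have h1 : HasDerivAt (fun y : ℝ => y) 1 x := hasDerivAt_id x
    have h := ((((h9.const_mul 10).sub
        (h7.const_mul (16 * (1 + m ^ 2)))).add
        (h5.const_mul (6 * (1 + 4 * m ^ 2 + m ^ 4)))).sub
        (h3.const_mul (8 * (m ^ 2 + m ^ 4)))).add
        (h1.const_mul (2 * m ^ 4))
    refine h.congr_deriv ?_
    ring
  have hQ1 : ∀ x : ℝ, HasDerivAt Q
      (720 * x ^ 7 - 672 * (1 + m ^ 2) * x ^ 5
        + 120 * (1 + 4 * m ^ 2 + m ^ 4) * x ^ 3 - 48 * (m ^ 2 + m ^ 4) * x) x := by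
    intro x
    have h8 : HasDerivAt (fun y : ℝ => y ^ 8) (8 * x ^ 7) x := by
      simpa using hasDerivAt_pow 8 x
    have h6 : HasDerivAt (fun y : ℝ => y ^ 6) (6 * x ^ 5) x := by
      simpa using hasDerivAt_pow 6 x
    have h4 : HasDerivAt (fun y : ℝ => y ^ 4) (4 * x ^ 3) x := by
      simpa using hasDerivAt_pow 4 x
    have h2 : HasDerivAt (fun y : ℝ => y ^ 2) (2 * x) x := by
      simpa using hasDerivAt_pow 2 x
    have h := (((((h8.const_mul 90).sub
        (h6.const_mul (112 * (1 + m ^ 2)))).add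
        (h4.const_mul (30 * (1 + 4 * m ^ 2 + m ^ 4)))).sub
        (h2.const_mul (24 * (m ^ 2 + m ^ 4)))).add_const (2 * m ^ 4))
    refine h.congr_deriv ?_
    ring
  have hderivW : deriv W = P := funext fun x => (hW1 x).deriv
  have hit2 : iteratedDeriv 2 W = deriv P := by
    rw [show (2 : ℕ) = 1 + 1 from rfl, iteratedDeriv_succ, iteratedDeriv_one, hderivW]
  have hderivP : deriv P = Q := funext fun x => (hP1 x).deriv
  have hV : V = fun x => (P x) ^ 2 / W x - Q x := by
    funext x
    show (deriv W x) ^ 2 / W x - iteratedDeriv 2 W x = _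
    rw [hderivW, hit2, hderivP]
  have hWne : W φ ≠ 0 := ne_of_gt hWpos
  have hVd : HasDerivAt V
      ((2 * P φ ^ 1 * Q φ * W φ - P φ ^ 2 * P φ) / (W φ) ^ 2
        - (720 * φ ^ 7 - 672 * (1 + m ^ 2) * φ ^ 5
          + 120 * (1 + 4 * m ^ 2 + m ^ 4) * φ ^ 3 - 48 * (m ^ 2 + m ^ 4) * φ)) φ := by
    rw [hV]
    exact (((hP1 φ).pow 2).div (hW1 φ) hWne).sub (hQ1 φ)
  rw [hVd.deriv]
  have key : (2 * P φ ^ 1 * Q φ * W φ - P φ ^ 2 * P φ) / (W φ) ^ 2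
      - (720 * φ ^ 7 - 672 * (1 + m ^ 2) * φ ^ 5
        + 120 * (1 + 4 * m ^ 2 + m ^ 4) * φ ^ 3 - 48 * (m ^ 2 + m ^ 4) * φ)
      = 24 * φ ^ 3 * U φ := by
    rw [div_sub' (pow_ne_zero 2 hWne), div_eq_iff (pow_ne_zero 2 hWne)]
    have hWφ : W φ = φ ^ 2 * (φ ^ 2 - 1) ^ 2 * (φ ^ 2 - m ^ 2) ^ 2 := rfl
    have hUφ : U φ = m ^ 4 - 2 * (φ ^ 2 + 2 / 3) * m ^ 2
        + (10 / 3) * φ ^ 4 - 2 * φ ^ 2 + 1 := rfl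
    rw [hWφ, hUφ]
    simp only [hPdef, hQdef]
    ring
  rw [key]
  have : (0:ℝ) ≤ 24 * φ ^ 3 := by positivity
  exact mul_nonneg this (hU φ)
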